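/- arXiv:2107.01270 — 2 statements merged into one kernel-verified Lean document; each statement's English description precedes it below -/
import Mathlib

section
/- Let K be a number field with ring of integers A, let n be a positive integer, and suppose that for some set S of residue classes generating the unit group (ℤ/nℤ)ˣ, every class in S contains a rational prime p that is semi-split in K (i.e., there is a maximal ideal 𝔪 of A over p with residue field A/𝔪 ≅ 𝔽_p). Then the n-th cyclotomic polynomial Φₙ(X) is irreducible over K. -/
set_option synthInstance.maxHeartbeats 400000
set_option maxHeartbeats 1600000
open Polynomial NumberField

noncomputable def residueHom (K : Type*) [Field K] [NumberField K] {p : ℕ} (hp : p.Prime)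
    (𝔪 : Ideal (𝓞 K)) (hnorm : Ideal.absNorm 𝔪 = p) : 𝓞 K →+* ZMod p := by
  have hcard : Nat.card (𝓞 K ⧸ 𝔪) = p := by
    rw [← Submodule.cardQuot_apply, ← Ideal.absNorm_apply]; exact hnorm
  have hfin : Finite (𝓞 K ⧸ 𝔪) := by
    refine Nat.finite_of_card_ne_zero ?_
    rw [hcard]; exact hp.pos.ne'
  letI : Fintype (𝓞 K ⧸ 𝔪) := Fintype.ofFinite _
  have hcard' : Fintype.card (𝓞 K ⧸ 𝔪) = p := by
    rw [← Nat.card_eq_fintype_card]; exact hcard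
  exact ((ZMod.ringEquivOfPrime _ hp hcard').symm).toRingHom.comp (Ideal.Quotient.mk 𝔪)

lemma minpoly_eq_pow_of_semiSplit {K : Type*} [Field K] [NumberField K] {L : Type*} [Field L]
    [Algebra K L] {n p : ℕ} (hn : 0 < n) (hp : p.Prime) (hdiv : ¬ p ∣ n)
    (𝔪 : Ideal (𝓞 K)) (hnorm : Ideal.absNorm 𝔪 = p)
    {μ : L} (hμ : IsPrimitiveRoot μ n) :
    minpoly K μ = minpoly K (μ ^ p) := by
  haveI : Fact p.Prime := ⟨hp⟩
  have hchar : CharZero L := charZero_of_injective_algebraMap (algebraMap K L).injective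
  have hint : IsIntegral (𝓞 K) μ := by
    refine ⟨X ^ n - 1, monic_X_pow_sub_C 1 hn.ne', ?_⟩
    simp only [hμ.pow_eq_one, eval₂_one, eval₂_X_pow, eval₂_sub, sub_self]
  have hintp : IsIntegral (𝓞 K) (μ ^ p) := hint.pow p
  set P := minpoly (𝓞 K) μ with hP
  set Q := minpoly (𝓞 K) (μ ^ p) with hQ
  have Pmonic : P.Monic := minpoly.monic hint
  have Qmonic : Q.Monic := minpoly.monic hintp
  suffices hPQ : P = Q by
    rw [minpoly.isIntegrallyClosed_eq_field_fractions' K hint,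
      minpoly.isIntegrallyClosed_eq_field_fractions' K hintp, ← hP, ← hQ, hPQ]
  by_contra hne
  have hintK : IsIntegral K μ := hint.tower_top
  have hintKp : IsIntegral K (μ ^ p) := hintp.tower_top
  have hmapP : minpoly K μ = P.map (algebraMap (𝓞 K) K) :=
    minpoly.isIntegrallyClosed_eq_field_fractions' K hint
  have hmapQ : minpoly K (μ ^ p) = Q.map (algebraMap (𝓞 K) K) :=
    minpoly.isIntegrallyClosed_eq_field_fractions' K hintp
  have hinj : Function.Injective (algebraMap (𝓞 K) K) := IsFractionRing.injective _ _
  have hneK : minpoly K μ ≠ minpoly K (μ ^ p) := by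
    rw [hmapP, hmapQ]
    intro h
    exact hne (Polynomial.map_injective _ hinj h)
  have PKirr : Irreducible (minpoly K μ) := minpoly.irreducible hintK
  have QKirr : Irreducible (minpoly K (μ ^ p)) := minpoly.irreducible hintKp
  have hcop : IsCoprime (minpoly K μ) (minpoly K (μ ^ p)) := by
    rw [Irreducible.coprime_iff_not_dvd PKirr]
    intro hdvd
    exact hneK (eq_of_monic_of_associated (minpoly.monic hintK) (minpoly.monic hintKp)
      (associated_of_dvd_dvd hdvd (PKirr.dvd_symm QKirr hdvd)))
  have hrootK : ∀ x : L, x ^ n = 1 → Polynomial.aeval x ((X : K[X]) ^ n - 1) = 0 := by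
    intro x hx
    rw [map_sub, map_pow, aeval_X, map_one, hx, sub_self]
  have hprodK : minpoly K μ * minpoly K (μ ^ p) ∣ (X : K[X]) ^ n - 1 :=
    hcop.mul_dvd (minpoly.dvd K μ (hrootK μ hμ.pow_eq_one))
      (minpoly.dvd K (μ ^ p) (hrootK _ (by rw [← pow_mul, mul_comm, pow_mul, hμ.pow_eq_one, one_pow])))
  have hprodA : P * Q ∣ (X : (𝓞 K)[X]) ^ n - 1 := by
    rw [← map_dvd_map (algebraMap (𝓞 K) K) hinj (Pmonic.mul Qmonic)]
    rw [Polynomial.map_mul, Polynomial.map_sub, Polynomial.map_pow, Polynomial.map_one, map_X,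
      ← hmapP, ← hmapQ]
    exact hprodK
  have hexpand : P ∣ expand (𝓞 K) p Q := by
    refine minpoly.isIntegrallyClosed_dvd hint ?_
    rw [aeval_def, coe_expand, ← comp, eval₂_eq_eval_map, map_comp, Polynomial.map_pow, map_X,
      eval_comp, eval_pow, eval_X, ← eval₂_eq_eval_map, ← aeval_def]
    exact minpoly.aeval _ _
  set φ := residueHom K hp 𝔪 hnorm
  set Pb := P.map φ with hPb
  set Qb := Q.map φ with hQb
  have hprodb : Pb * Qb ∣ (X : (ZMod p)[X]) ^ n - 1 := by
    have := Polynomial.map_dvd (f := φ) hprodA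
    rwa [Polynomial.map_mul, Polynomial.map_sub, Polynomial.map_pow, Polynomial.map_one,
      map_X] at this
  have hPbQbp : Pb ∣ Qb ^ p := by
    have := Polynomial.map_dvd (f := φ) hexpand
    rwa [map_expand, ZMod.expand_card] at this
  have hnzero : (n : ZMod p) ≠ 0 := fun h => hdiv ((ZMod.natCast_eq_zero_iff n p).1 h)
  have hfree : Squarefree ((X : (ZMod p)[X]) ^ n - 1) :=
    (separable_X_pow_sub_C 1 hnzero one_ne_zero).squarefree
  have hPbsep : Pb.Separable :=
    Separable.of_dvd (separable_X_pow_sub_C 1 hnzero one_ne_zero)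
      ((dvd_mul_right Pb Qb).trans hprodb)
  have hPbQb : Pb ∣ Qb := hPbsep.squarefree.isRadical p Qb hPbQbp
  have hunit : IsUnit Pb :=
    hfree Pb ((mul_dvd_mul dvd_rfl hPbQb).trans hprodb)
  have hdeg : Pb.degree = P.degree :=
    degree_map_eq_of_leadingCoeff_ne_zero _ (by simp [Pmonic.leadingCoeff])
  have := degree_eq_zero_of_isUnit hunit
  rw [hdeg] at this
  exact (minpoly.degree_pos hint).ne' this

/-- A rational prime `p` is semi-split in the number field `K` if some maximal ideal of
the ring of integers of `K` lying over `p` has residue field `𝔽_p`, i.e. of cardinality `p`. -/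
def IsSemiSplit (K : Type*) [Field K] [NumberField K] (p : ℕ) : Prop :=
  ∃ 𝔪 : Ideal (NumberField.RingOfIntegers K), 𝔪.IsMaximal ∧
    (p : NumberField.RingOfIntegers K) ∈ 𝔪 ∧ Ideal.absNorm 𝔪 = p

/-- If every residue class in some generating set of `(ℤ/nℤ)ˣ` contains a rational prime
semi-split in the number field `K`, then the `n`-th cyclotomic polynomial is irreducible
over `K`. -/
theorem stmt_3 (K : Type*) [Field K] [NumberField K] (n : ℕ) (hn : 0 < n)
    (S : Set (ZMod n)ˣ) (hS : Subgroup.closure S = ⊤)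
    (hsemi : ∀ a ∈ S, ∃ p : ℕ, p.Prime ∧ IsSemiSplit K p ∧ (p : ZMod n) = (a : ZMod n)) :
    Irreducible (Polynomial.cyclotomic n K) := by
  rcases eq_or_lt_of_le (show 1 ≤ n from hn) with h1 | h1n
  · rw [← h1, cyclotomic_one]
    exact irreducible_X_sub_C 1
  haveI : NeZero n := ⟨hn.ne'⟩
  -- splitting field and a primitive root
  set L := (cyclotomic n K).SplittingField with hL
  haveI : CharZero L := charZero_of_injective_algebraMap (algebraMap K L).injective
  haveI : NeZero ((n : L)) := ⟨Nat.cast_ne_zero.2 hn.ne'⟩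
  have hdeg0 : (cyclotomic n K).degree ≠ 0 := by
    rw [degree_cyclotomic]
    exact_mod_cast (Nat.totient_pos.2 hn).ne'
  obtain ⟨ζ, hζ0⟩ := (SplittingField.splits (cyclotomic n K)).exists_eval_eq_zero
    (by rwa [degree_map])
  have hζ : IsPrimitiveRoot ζ n := by
    have hroot : (cyclotomic n L).IsRoot ζ := by
      rw [IsRoot.def, ← map_cyclotomic n (algebraMap K L)]
      exact hζ0
    exact isRoot_cyclotomic_iff.1 hroot
  -- power-reduction helper
  have hpow : ∀ (ν : L), IsPrimitiveRoot ν n → ∀ k : ℕ, ν ^ (k % n) = ν ^ k := by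
    intro ν hν k
    conv_rhs => rw [← Nat.mod_add_div k n, pow_add, pow_mul, hν.pow_eq_one, one_pow, mul_one]
  -- the subgroup of exponents fixing minimal polynomials
  set H : Subgroup (ZMod n)ˣ :=
    { carrier := {u | ∀ ν : L, IsPrimitiveRoot ν n →
        minpoly K ν = minpoly K (ν ^ ((u : ZMod n).val))}
      one_mem' := by
        intro ν hν
        rw [Units.val_one, ZMod.val_one_eq_one_mod, Nat.mod_eq_of_lt h1n, pow_one]
      mul_mem' := by
        intro a b ha hb ν hν
        have h1 := ha ν hν
        have h2 := hb (ν ^ ((a : ZMod n).val)) (hν.pow_of_coprime _ (ZMod.val_coe_unit_coprime a))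
        have e : ν ^ (((a * b : (ZMod n)ˣ) : ZMod n).val)
            = (ν ^ ((a : ZMod n).val)) ^ ((b : ZMod n).val) := by
          rw [← pow_mul, Units.val_mul, ZMod.val_mul, hpow ν hν]
        rw [e, ← h2, ← h1]
      inv_mem' := by
        intro a ha ν hν
        set w := ((a⁻¹ : (ZMod n)ˣ) : ZMod n).val with hw
        have hprim : IsPrimitiveRoot (ν ^ w) n :=
          hν.pow_of_coprime _ (ZMod.val_coe_unit_coprime _)
        have h1 := ha (ν ^ w) hprim
        have e : (ν ^ w) ^ ((a : ZMod n).val) = ν := by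
          rw [← pow_mul, ← hpow ν hν, ← ZMod.val_mul, ← Units.val_mul, inv_mul_cancel,
            Units.val_one, ZMod.val_one_eq_one_mod, Nat.mod_eq_of_lt h1n, pow_one]
        rw [e] at h1
        exact h1.symm }
  -- S is contained in H
  have hSsub : S ⊆ ↑H := by
    intro a ha
    obtain ⟨p, hp, ⟨𝔪, hmax, hmem, hnorm⟩, hpa⟩ := hsemi a ha
    have hvala : ((a : ZMod n)).val = p % n := by
      rw [← hpa, ZMod.val_natCast]
    have hcop : Nat.Coprime (p % n) n := by
      rw [← hvala]; exact ZMod.val_coe_unit_coprime a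
    have hcop' : Nat.Coprime p n := by
      have : Nat.Coprime n p := by
        unfold Nat.Coprime
        rw [Nat.gcd_rec]
        exact hcop
      exact this.symm
    have hdiv : ¬ p ∣ n := (Nat.Prime.coprime_iff_not_dvd hp).1 hcop'
    intro ν hν
    have := minpoly_eq_pow_of_semiSplit hn hp hdiv 𝔪 hnorm hν
    rw [this, hvala, hpow ν hν]
  have hall : ∀ u : (ZMod n)ˣ, u ∈ H := by
    intro u
    have : (⊤ : Subgroup (ZMod n)ˣ) ≤ H := by
      rw [← hS]; exact (Subgroup.closure_le H).2 hSsub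
    exact this (Subgroup.mem_top u)
  -- counting roots
  have hintK : IsIntegral K ζ := by
    refine ⟨X ^ n - 1, monic_X_pow_sub_C 1 hn.ne', ?_⟩
    simp only [hζ.pow_eq_one, eval₂_one, eval₂_X_pow, eval₂_sub, sub_self]
  classical
  have hsubset : primitiveRoots n L ⊆ ((minpoly K ζ).map (algebraMap K L)).roots.toFinset := by
    intro x hx
    obtain ⟨m, _, hcop, rfl⟩ := (hζ.isPrimitiveRoot_iff).1 ((mem_primitiveRoots hn).1 hx)
    have hu := hall (ZMod.unitOfCoprime m hcop)
    have hval : ((ZMod.unitOfCoprime m hcop : (ZMod n)ˣ) : ZMod n).val = m % n := by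
      rw [ZMod.coe_unitOfCoprime, ZMod.val_natCast]
    have hmin : minpoly K ζ = minpoly K (ζ ^ m) := by
      have := hu ζ hζ
      rwa [hval, hpow ζ hζ] at this
    rw [Multiset.mem_toFinset, mem_roots']
    refine ⟨map_monic_ne_zero (minpoly.monic hintK), ?_⟩
    rw [IsRoot.def, eval_map, ← aeval_def, hmin]
    exact minpoly.aeval K (ζ ^ m)
  have htot : n.totient ≤ (minpoly K ζ).natDegree := by
    calc
      n.totient = (primitiveRoots n L).card := hζ.card_primitiveRoots.symm
      _ ≤ ((minpoly K ζ).map (algebraMap K L)).roots.toFinset.card :=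
        Finset.card_le_card hsubset
      _ ≤ Multiset.card ((minpoly K ζ).map (algebraMap K L)).roots := Multiset.toFinset_card_le _
      _ ≤ ((minpoly K ζ).map (algebraMap K L)).natDegree := card_roots' _
      _ ≤ (minpoly K ζ).natDegree := natDegree_map_le
  have hdvd : minpoly K ζ ∣ cyclotomic n K := by
    refine minpoly.dvd K ζ ?_
    rw [aeval_def, ← eval_map, map_cyclotomic]
    exact hζ.isRoot_cyclotomic hn
  have heq : cyclotomic n K = minpoly K ζ := by
    refine eq_of_monic_of_dvd_of_natDegree_le (minpoly.monic hintK) (cyclotomic.monic n K)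
      hdvd ?_
    rw [natDegree_cyclotomic]
    exact htot
  rw [heq]
  exact minpoly.irreducible hintK
end

section
/- Let K be a number field such that all but finitely many rational primes are semi-split in K. Then for every positive integer n, the n-th cyclotomic polynomial Φₙ(X) is irreducible over K. -/
open Polynomial

set_option maxHeartbeats 1000000
set_option synthInstance.maxHeartbeats 1000000

section Aux

variable {K : Type*} [Field K] [NumberField K]
variable {L : Type*} [Field L] [Algebra K L]
variable [Algebra (NumberField.RingOfIntegers K) L]
  [IsScalarTower (NumberField.RingOfIntegers K) K L]

local notation "𝒪" => NumberField.RingOfIntegers K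

variable {n : ℕ} {μ : L}

theorem aux_nzsd : NoZeroSMulDivisors 𝒪 L := by
  suffices hinj : Function.Injective (algebraMap 𝒪 L) from ⟨fun {c x} hcx => by rw [Algebra.smul_def, mul_eq_zero] at hcx; exact hcx.imp_left (fun h0 => hinj (by rw [h0, map_zero]))⟩
  rw [IsScalarTower.algebraMap_eq 𝒪 K L]
  exact (algebraMap K L).injective.comp (IsFractionRing.injective 𝒪 K)

theorem aux_isIntegral (h : IsPrimitiveRoot μ n) (hpos : 0 < n) : IsIntegral 𝒪 μ := by
  refine ⟨X ^ n - 1, monic_X_pow_sub_C 1 hpos.ne', ?_⟩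
  simp only [eval₂_sub, eval₂_X_pow, eval₂_one, h.pow_eq_one, sub_self]

theorem aux_minpoly_dvd (h : IsPrimitiveRoot μ n) (hpos : 0 < n) :
    minpoly 𝒪 μ ∣ X ^ n - 1 := by
  haveI := aux_nzsd (K := K) (L := L)
  apply minpoly.isIntegrallyClosed_dvd (aux_isIntegral h hpos)
  simp only [map_sub, map_pow, aeval_X, map_one, h.pow_eq_one, sub_self]

/-- Key lemma: if `p` is a semi-split prime not dividing `n` and `μ` is a primitive `n`-th
root of unity, then `μ` and `μ ^ p` have the same minimal polynomial over `𝒪`. -/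
theorem semisplit_minpoly_eq_pow (h : IsPrimitiveRoot μ n) (hpos : 0 < n)
    {p : ℕ} (hp : p.Prime) (hdiv : ¬ p ∣ n) (hss : IsSemiSplit K p) :
    minpoly 𝒪 μ = minpoly 𝒪 (μ ^ p) := by
  classical
  haveI := aux_nzsd (K := K) (L := L)
  haveI := Fact.mk hp
  obtain ⟨𝔪, hmax, hpm, hnorm⟩ := hss
  haveI := hmax
  set F := 𝒪 ⧸ 𝔪 with hF
  letI : Field F := Ideal.Quotient.field 𝔪
  have hcard' : Nat.card F = p := by
    rw [← Submodule.cardQuot_apply, ← Ideal.absNorm_apply, hnorm]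
  haveI : Finite F := Nat.finite_of_card_ne_zero (by rw [hcard']; exact hp.pos.ne')
  haveI : Fintype F := Fintype.ofFinite F
  have hcard : Fintype.card F = p := by rw [← Nat.card_eq_fintype_card, hcard']
  haveI hchar : CharP F p := by
    refine (CharP.charP_iff_prime_eq_zero hp).2 ?_
    have : ((Ideal.Quotient.mk 𝔪) ((p : ℕ) : 𝒪)) = 0 := Ideal.Quotient.eq_zero_iff_mem.2 hpm
    rwa [map_natCast] at this
  -- Frobenius on `F` is the identity
  haveI : ExpChar F p := .prime hp
  have hexp : ∀ f : F[X], expand F p f = f ^ p := by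
    intro f
    have hfrob : frobenius F p = RingHom.id F := by
      ext x
      simp only [RingHom.comp_apply, RingHom.id_apply, frobenius_def]
      have h1 := FiniteField.pow_card ((Ideal.Quotient.mk 𝔪) x)
      rw [hcard] at h1
      exact h1
    have := Polynomial.map_frobenius_expand p f
    rwa [hfrob, Polynomial.map_id] at this
  have hint : IsIntegral 𝒪 μ := aux_isIntegral h hpos
  have hintp : IsIntegral 𝒪 (μ ^ p) := hint.pow p
  by_contra hdiff
  set P := minpoly 𝒪 μ with hP
  set Q := minpoly 𝒪 (μ ^ p) with hQ
  have Pmonic : P.Monic := minpoly.monic hint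
  have Qmonic : Q.Monic := minpoly.monic hintp
  have Pirr : Irreducible P := minpoly.irreducible hint
  -- `μ ^ p` is not a root of `P`
  have haroot : Polynomial.aeval (μ ^ p) P ≠ 0 := by
    intro ha
    have hQP : Q ∣ P := minpoly.isIntegrallyClosed_dvd hintp ha
    obtain ⟨c, hc⟩ := hQP
    rcases Pirr.isUnit_or_isUnit hc with hu | hu
    · have : Q.natDegree = 0 := natDegree_eq_zero_of_isUnit hu
      exact absurd this (minpoly.natDegree_pos hintp).ne'
    · have hassoc : Associated Q P := ⟨hu.unit, by rw [IsUnit.unit_spec, ← hc]⟩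
      exact hdiff (eq_of_monic_of_associated Pmonic Qmonic hassoc.symm)
  have hPdvd : P ∣ X ^ n - 1 := aux_minpoly_dvd h hpos
  obtain ⟨S, hS⟩ := hPdvd
  have hSroot : Polynomial.aeval (μ ^ p) S = 0 := by
    have h0 : Polynomial.aeval (μ ^ p) ((X : 𝒪[X]) ^ n - 1) = 0 := by
      rw [map_sub, map_pow, aeval_X, map_one, ← pow_mul, mul_comm p n, pow_mul, h.pow_eq_one,
        one_pow, sub_self]
    rw [hS, map_mul, mul_eq_zero] at h0
    exact h0.resolve_left haroot
  have hQS : Q ∣ S := minpoly.isIntegrallyClosed_dvd hintp hSroot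
  obtain ⟨T, hT⟩ := hQS
  have prod : P * Q ∣ ((X : 𝒪[X]) ^ n - 1) := ⟨T, by rw [hS, hT, mul_assoc]⟩
  -- `P` divides the expansion of `Q` by `p`
  have hPexp : P ∣ expand 𝒪 p Q := by
    refine minpoly.isIntegrallyClosed_dvd hint ?_
    rw [aeval_def, coe_expand, ← comp, eval₂_eq_eval_map, map_comp, Polynomial.map_pow, map_X,
      eval_comp, eval_pow, eval_X, ← eval₂_eq_eval_map, ← aeval_def]
    exact minpoly.aeval _ _
  set φ := Ideal.Quotient.mk 𝔪 with hphi
  have hPbQbp : P.map φ ∣ (Q.map φ) ^ p := by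
    have hqq : (Q.map φ) ^ p = (expand 𝒪 p Q).map φ := by
      rw [Polynomial.map_expand, hexp]
    rw [hqq]
    exact Polynomial.map_dvd φ hPexp
  have prodb : P.map φ * Q.map φ ∣ ((X : F[X]) ^ n - 1) := by
    have hh := Polynomial.map_dvd φ prod
    rwa [Polynomial.map_mul, Polynomial.map_sub, Polynomial.map_pow, map_X, Polynomial.map_one]
      at hh
  have hsep : Separable ((X : F[X]) ^ n - 1) := by
    have hne : (n : F) ≠ 0 := fun h0 => hdiv ((CharP.cast_eq_zero_iff F p n).1 h0)
    have hs := separable_X_pow_sub_C (1 : F) hne one_ne_zero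
    rwa [Polynomial.C_1] at hs
  have hPbsq : Squarefree (P.map φ) :=
    (hsep.of_dvd (dvd_trans (dvd_mul_right _ _) prodb)).squarefree
  have hPbQb : P.map φ ∣ Q.map φ := hPbsq.isRadical p _ hPbQbp
  obtain ⟨R', hR'⟩ := hPbQb
  obtain ⟨T', hT'⟩ := prodb
  have hunit : IsUnit (P.map φ) := by
    refine hsep.squarefree (P.map φ) ⟨R' * T', ?_⟩
    rw [hT', hR']; ring
  have h0 : (P.map φ).natDegree = 0 := natDegree_eq_zero_of_isUnit hunit
  rw [Pmonic.natDegree_map] at h0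
  exact (minpoly.natDegree_pos hint).ne' h0

theorem semisplit_minpoly_K_eq_pow (h : IsPrimitiveRoot μ n) (hpos : 0 < n)
    {p : ℕ} (hp : p.Prime) (hdiv : ¬ p ∣ n) (hss : IsSemiSplit K p) :
    minpoly K μ = minpoly K (μ ^ p) := by
  have hint := aux_isIntegral (K := K) h hpos
  rw [minpoly.isIntegrallyClosed_eq_field_fractions' K hint,
    minpoly.isIntegrallyClosed_eq_field_fractions' K (hint.pow p),
    semisplit_minpoly_eq_pow h hpos hp hdiv hss]


end Aux

/-- If all but finitely many rational primes are semi-split in the number field `K`, then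
every cyclotomic polynomial is irreducible over `K`. -/
theorem stmt_7 (K : Type*) [Field K] [NumberField K]
    (h : {p : ℕ | p.Prime ∧ ¬ IsSemiSplit K p}.Finite) :
    ∀ n : ℕ, 0 < n → Irreducible (Polynomial.cyclotomic n K) := by
  intro n hn
  haveI : NeZero n := ⟨hn.ne'⟩
  let n' : ℕ+ := ⟨n, hn⟩
  haveI : NeZero ((n' : ℕ) : K) := ⟨Nat.cast_ne_zero.2 hn.ne'⟩
  set L := CyclotomicField n' K with hL
  letI : Algebra (NumberField.RingOfIntegers K) L :=
    ((algebraMap K L).comp (algebraMap (NumberField.RingOfIntegers K) K)).toAlgebra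
  letI : @IsScalarTower (NumberField.RingOfIntegers K) K L Algebra.toSMul Algebra.toSMul Algebra.toSMul :=
    IsScalarTower.of_algebraMap_eq fun x => rfl
  set ζ := IsCyclotomicExtension.zeta n' K L with hzdef
  have hζ : IsPrimitiveRoot ζ n := IsCyclotomicExtension.zeta_spec n' K L
  have hintK : IsIntegral K ζ := ⟨X ^ n - 1, monic_X_pow_sub_C 1 hn.ne', by
    simp only [eval₂_sub, eval₂_X_pow, eval₂_one, hζ.pow_eq_one, sub_self]⟩
  obtain ⟨B, hB⟩ := h.bddAbove
  have key : ∀ m : ℕ, Nat.Coprime m n → minpoly K ζ = minpoly K (ζ ^ m) := by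
    intro m hm
    obtain ⟨q, hqgt, hqp, hqmod⟩ :=
      Nat.forall_exists_prime_gt_and_eq_mod ((ZMod.isUnit_iff_coprime m n).2 hm) (max n B)
    have hqn : ¬ q ∣ n := by
      refine (Nat.Prime.coprime_iff_not_dvd hqp).1 ?_
      rw [← ZMod.isUnit_iff_coprime, hqmod]
      exact (ZMod.isUnit_iff_coprime m n).2 hm
    have hss : IsSemiSplit K q := by
      by_contra hc
      have hqB : q ≤ B := hB ⟨hqp, hc⟩
      omega
    have hq : minpoly K ζ = minpoly K (ζ ^ q) :=
      semisplit_minpoly_K_eq_pow hζ hn hqp hqn hss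
    have hpowmod : ∀ a : ℕ, ζ ^ a = ζ ^ (a % n) := fun a => by
      conv_lhs => rw [← Nat.div_add_mod a n]
      rw [pow_add, pow_mul, hζ.pow_eq_one, one_pow, one_mul]
    have hmod : q % n = m % n := (ZMod.natCast_eq_natCast_iff q m n).1 hqmod
    have hpow : ζ ^ q = ζ ^ m := by rw [hpowmod q, hpowmod m, hmod]
    rw [hq, hpow]
  have hdeg : n.totient ≤ (minpoly K ζ).natDegree := by
    classical
    have hsub : primitiveRoots n L ⊆ ((minpoly K ζ).map (algebraMap K L)).roots.toFinset := by
      intro x hx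
      obtain ⟨m, -, hcop, rfl⟩ := (hζ.isPrimitiveRoot_iff).1 ((mem_primitiveRoots hn).1 hx)
      rw [Multiset.mem_toFinset, mem_roots (map_monic_ne_zero (minpoly.monic hintK)),
        IsRoot.def, eval_map, ← aeval_def, key m hcop]
      exact minpoly.aeval _ _
    calc n.totient = (primitiveRoots n L).card := hζ.card_primitiveRoots.symm
      _ ≤ ((minpoly K ζ).map (algebraMap K L)).roots.toFinset.card := Finset.card_le_card hsub
      _ ≤ Multiset.card ((minpoly K ζ).map (algebraMap K L)).roots := Multiset.toFinset_card_le _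
      _ ≤ ((minpoly K ζ).map (algebraMap K L)).natDegree := card_roots' _
      _ ≤ (minpoly K ζ).natDegree := natDegree_map_le
  have hdvd : minpoly K ζ ∣ cyclotomic n K := by
    refine minpoly.dvd K ζ ?_
    rw [aeval_def, eval₂_eq_eval_map, map_cyclotomic]
    exact hζ.isRoot_cyclotomic hn
  have heq : cyclotomic n K = minpoly K ζ :=
    eq_of_monic_of_dvd_of_natDegree_le (minpoly.monic hintK) (cyclotomic.monic n K) hdvd
      (by rw [natDegree_cyclotomic]; exact hdeg)
  rw [heq]
  exact minpoly.irreducible hintK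
end
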